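/- arXiv:1911.06055 — 2 statements merged into one kernel-verified Lean document; each statement's English description precedes it below -/
import Mathlib

section
/- Let r > 0, and suppose a room of capacity c with s = c mod r > 0 and another room of capacity c' with s' = c' mod r > 0 satisfy s ≤ s'. Given an available slack of S students to remove with s ≤ S < s + s', removing s students from the first room saves one proctor (⌈(c-s)/r⌉ = ⌈c/r⌉ - 1) while removing any k ≤ S students from the second room with k < s' saves none. Hence prioritizing the room with the smaller positive remainder is optimal for a single removal. -/
lemma ceil_nat_div_exact (q d : ℕ) (hd : 0 < d) :
    ⌈((d * q : ℕ) : ℚ) / (d : ℚ)⌉₊ = q := by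
  have hd' : (d : ℚ) ≠ 0 := by positivity
  rw [Nat.cast_mul, mul_comm, mul_div_assoc, div_self hd', mul_one, Nat.ceil_natCast]

lemma ceil_nat_div_pos_rem (n d : ℕ) (hd : 0 < d) (h : n % d ≠ 0) :
    ⌈((n : ℕ) : ℚ) / (d : ℚ)⌉₊ = n / d + 1 := by
  have hdq : (0:ℚ) < (d:ℚ) := by exact_mod_cast hd
  have hq := Nat.div_add_mod' n d
  have hr := Nat.mod_lt n hd
  rw [Nat.ceil_eq_iff (Nat.succ_ne_zero _)]
  refine ⟨?_, ?_⟩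
  · rw [Nat.succ_sub_one, lt_div_iff₀ hdq]
    have : (n / d) * d < n := by omega
    exact_mod_cast this
  · rw [div_le_iff₀ hdq]
    have h2 : (n / d + 1) * d = n / d * d + d := by ring
    have : n ≤ (n / d + 1) * d := by omega
    exact_mod_cast this

/-- Greedy exchange argument: with remainders `0 < s ≤ s'` and slack
`s ≤ S < s + s'`, removing `s` students from the first room saves a proctor,
while removing any `k ≤ S` with `k < s'` from the second room saves none. -/
theorem stmt_9 (r : ℕ) (hr : 0 < r) (c c' : ℕ) (hc : 0 < c) (hc' : 0 < c')
    (s s' : ℕ) (hs : c % r = s) (hs' : c' % r = s')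
    (hspos : 0 < s) (hs'pos : 0 < s') (hss' : s ≤ s')
    (S : ℕ) (hS1 : s ≤ S) (hS2 : S < s + s') :
    (⌈((c - s : ℕ) : ℚ) / (r : ℚ)⌉₊ = ⌈(c : ℚ) / (r : ℚ)⌉₊ - 1) ∧
    (∀ k : ℕ, k ≤ S → k < s' →
      ⌈((c' - k : ℕ) : ℚ) / (r : ℚ)⌉₊ = ⌈(c' : ℚ) / (r : ℚ)⌉₊) := by
  constructor
  · have h1 : c - s = r * (c / r) := by
      have := Nat.div_add_mod c r
      omega
    have h2 : ⌈((c - s : ℕ) : ℚ) / (r : ℚ)⌉₊ = c / r := by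
      rw [h1]; exact ceil_nat_div_exact _ _ hr
    have h3 : ⌈(c : ℚ) / (r : ℚ)⌉₊ = c / r + 1 :=
      ceil_nat_div_pos_rem c r hr (by omega)
    omega
  · intro k hk1 hk2
    have hq := Nat.div_add_mod c' r
    have hrlt : c' % r < r := Nat.mod_lt c' hr
    have hsub : (c' - k) % r = s' - k := by
      have h1 : c' - k = r * (c' / r) + (s' - k) := by omega
      rw [h1, Nat.mul_add_mod]
      exact Nat.mod_eq_of_lt (by omega)
    have hsubdiv : (c' - k) / r = c' / r := by
      have h1 : c' - k = r * (c' / r) + (s' - k) := by omega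
      rw [h1, Nat.mul_add_div hr]
      have h2 : (s' - k) / r = 0 := Nat.div_eq_of_lt (by omega)
      omega
    rw [ceil_nat_div_pos_rem _ _ hr (by omega),
        ceil_nat_div_pos_rem _ _ hr (by omega), hsubdiv]
end

section
/- Let r > 0 and c : Fin N → ℕ. If there exists a subset S of rooms with ∑_{i∈S} c i ≥ D and c i mod r = 0 for all i ∈ S, and ∑_{i∈S} c i < D + r, then choosing exactly the rooms in S and distributing students so each chosen room is filled up to a multiple of r yields a schedule using exactly ⌈D/r⌉ proctors, which is optimal. -/
lemma hA (m r : ℕ) (hr : 0 < r) (hd : r ∣ m) :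
    ⌈((m : ℚ)) / (r : ℚ)⌉₊ = m / r := by
  obtain ⟨k, rfl⟩ := hd
  rw [Nat.mul_div_cancel_left _ hr]
  rw [show ((r * k : ℕ) : ℚ) / (r : ℚ) = (k : ℚ) by
    push_cast; field_simp]
  exact Nat.ceil_natCast k

lemma hB (m s r : ℕ) (hr : 0 < r) (hs : 0 < s) (hsr : s < r) (hd : r ∣ m)
    (hsm : s ≤ m) : ⌈(((m - s : ℕ) : ℚ)) / (r : ℚ)⌉₊ = m / r := by
  obtain ⟨k, rfl⟩ := hd
  have hk : k ≠ 0 := by rintro rfl; simp at hsm; omega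
  rw [Nat.mul_div_cancel_left _ hr, Nat.ceil_eq_iff hk]
  have hc : (((r * k - s : ℕ)) : ℚ) = (r : ℚ) * k - s := by
    push_cast [Nat.cast_sub hsm]; ring
  have hrq : (0 : ℚ) < (r : ℚ) := by exact_mod_cast hr
  constructor
  · rw [hc, lt_div_iff₀ hrq]
    have : (1 : ℚ) ≤ k := by exact_mod_cast Nat.one_le_iff_ne_zero.2 hk
    have hsq : (s : ℚ) < r := by exact_mod_cast hsr
    push_cast [Nat.cast_sub (Nat.one_le_iff_ne_zero.2 hk)]
    nlinarith
  · rw [hc, div_le_iff₀ hrq]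
    have hsq : (0 : ℚ) ≤ s := by positivity
    nlinarith

lemma hC {ι : Type*} (T : Finset ι) (f : ι → ℕ) (r : ℕ) :
    ⌈(((∑ i ∈ T, f i : ℕ)) : ℚ) / (r : ℚ)⌉₊ ≤ ∑ i ∈ T, ⌈((f i : ℚ)) / (r : ℚ)⌉₊ := by
  classical
  induction T using Finset.induction with
  | empty => simp
  | @insert a T' h ih =>
    rw [Finset.sum_insert h, Finset.sum_insert h]
    calc ⌈(((f a + ∑ i ∈ T', f i : ℕ)) : ℚ) / (r : ℚ)⌉₊
        = ⌈((f a : ℚ)) / r + ((∑ i ∈ T', f i : ℕ) : ℚ) / r⌉₊ := by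
          push_cast; rw [add_div]
      _ ≤ ⌈((f a : ℚ)) / r⌉₊ + ⌈(((∑ i ∈ T', f i : ℕ)) : ℚ) / r⌉₊ := Nat.ceil_add_le _ _
      _ ≤ _ := by exact Nat.add_le_add_left ih _
/-- If a subset `S` of rooms has total capacity covering `D` and within `r`
of it, with all capacities in `S` divisible by `r`, then filling the chosen
rooms suitably uses exactly `⌈D / r⌉` proctors, which is optimal among all
ways to seat the `D` students. -/
theorem stmt_15 (N : ℕ) (r : ℕ) (hr : 0 < r) (c : Fin N → ℕ) (D : ℕ)
    (S : Finset (Fin N)) (hcov : D ≤ ∑ i ∈ S, c i)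
    (hdvd : ∀ i ∈ S, r ∣ c i) (htight : ∑ i ∈ S, c i < D + r) :
    ∃ e : Fin N → ℕ,
      (∀ i ∈ S, e i ≤ c i) ∧ (∀ i ∉ S, e i = 0) ∧
      (∑ i ∈ S, e i = D) ∧
      (∑ i ∈ S, ⌈((e i : ℚ)) / (r : ℚ)⌉₊ = ⌈(D : ℚ) / (r : ℚ)⌉₊) ∧
      (∀ e' : Fin N → ℕ, (∑ i, e' i = D) →
        ∑ i ∈ S, ⌈((e i : ℚ)) / (r : ℚ)⌉₊ ≤ ∑ i, ⌈((e' i : ℚ)) / (r : ℚ)⌉₊) := by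
  classical
  set T := ∑ i ∈ S, c i with hT
  set s := T - D with hs
  have hsr : s < r := by omega
  have hsumdiv : ∑ i ∈ S, c i / r = T / r := by
    rw [eq_comm]
    apply Nat.div_eq_of_eq_mul_left hr
    rw [Finset.sum_mul]
    exact Finset.sum_congr rfl fun i hi => (Nat.div_mul_cancel (hdvd i hi)).symm
  have hTdvd : r ∣ T := Finset.dvd_sum hdvd
  have hDceil : ⌈(D : ℚ) / (r : ℚ)⌉₊ = T / r := by
    rcases Nat.eq_zero_or_pos s with h0 | hpos
    · have hDT : D = T := by omega
      rw [hDT]; exact hA T r hr hTdvd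
    · have hDT : D = T - s := by omega
      rw [hDT]; exact hB T s r hr hpos hsr hTdvd (by omega)
  rcases Nat.eq_zero_or_pos s with h0 | hpos
  · -- no slack: take e = c on S
    set E : Fin N → ℕ := fun i => if i ∈ S then c i else 0 with hE
    have hceil : ∑ i ∈ S, ⌈((E i : ℚ)) / (r : ℚ)⌉₊ = ⌈(D : ℚ) / (r : ℚ)⌉₊ := by
      rw [Finset.sum_congr rfl (g := fun i => c i / r)
        (fun i hi => by rw [hE]; simp only [if_pos hi]; exact hA _ r hr (hdvd i hi)),
        hsumdiv, hDceil]
    refine ⟨E, ?_, ?_, ?_, hceil, ?_⟩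
    · intro i hi; simp [hE, hi]
    · intro i hi; simp [hE, hi]
    · rw [Finset.sum_congr rfl (g := c) (fun i hi => by simp [hE, hi]), ← hT]; omega
    · intro e' he'
      rw [hceil, ← he']
      exact hC Finset.univ e' r
  · -- positive slack
    have hTpos : 0 < T := by omega
    have hex : ∃ j ∈ S, 0 < c j := by
      by_contra h
      push_neg at h
      have : T = 0 := Finset.sum_eq_zero fun i hi => by have := h i hi; omega
      omega
    obtain ⟨j, hjS, hjpos⟩ := hex
    have hjr : r ≤ c j := Nat.le_of_dvd hjpos (hdvd j hjS)
    have hsj : s ≤ c j := by omega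
    set E : Fin N → ℕ := fun i => if i = j then c j - s else if i ∈ S then c i else 0
      with hE
    have hEj : E j = c j - s := by simp [hE]
    have hEer : ∀ i ∈ S.erase j, E i = c i := fun i hi => by
      simp [hE, Finset.ne_of_mem_erase hi, Finset.mem_of_mem_erase hi]
    have hsum1 : ∑ i ∈ S, E i = D := by
      have h1 : ∑ i ∈ S.erase j, E i = ∑ i ∈ S.erase j, c i :=
        Finset.sum_congr rfl hEer
      have h2 := Finset.sum_erase_add S E hjS
      have h3 := Finset.sum_erase_add S c hjS
      omega
    have hceil : ∑ i ∈ S, ⌈((E i : ℚ)) / (r : ℚ)⌉₊ = ⌈(D : ℚ) / (r : ℚ)⌉₊ := by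
      have h1 : ∑ i ∈ S.erase j, ⌈((E i : ℚ)) / (r : ℚ)⌉₊
          = ∑ i ∈ S.erase j, c i / r :=
        Finset.sum_congr rfl fun i hi => by
          rw [hEer i hi]; exact hA _ r hr (hdvd i (Finset.mem_of_mem_erase hi))
      have hj1 : ⌈((E j : ℚ)) / (r : ℚ)⌉₊ = c j / r := by
        rw [hEj]; exact hB (c j) s r hr hpos hsr (hdvd j hjS) hsj
      have h2 := Finset.sum_erase_add S (fun i => ⌈((E i : ℚ)) / (r : ℚ)⌉₊) hjS
      have h3 := Finset.sum_erase_add S (fun i => c i / r) hjS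
      omega
    refine ⟨E, ?_, ?_, hsum1, hceil, ?_⟩
    · intro i hi
      by_cases h : i = j
      · subst h; rw [hEj]; omega
      · simp [hE, h, hi]
    · intro i hi
      have hij : i ≠ j := by rintro rfl; exact hi hjS
      simp [hE, hij, hi]
    · intro e' he'
      rw [hceil, ← he']
      exact hC Finset.univ e' r
end
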